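/- A triple (p,q,r) of positive integers with gcd(p,q,r)=1, p < q ≤ r, and q + r > p satisfies q + r = gcd(p,q) + gcd(p,r) + gcd(q,q+r-p) + gcd(r,q+r-p) if and only if (p,q,r) ∈ {(1,2,3), (1,3,4), (1,2,2)}. -/

import Mathlib

theorem stmt_4 (p q r : ℕ) (hp : 0 < p) (hq : 0 < q) (hr : 0 < r)
    (hgcd : Nat.gcd (Nat.gcd p q) r = 1) (h1 : p < q) (h2 : q ≤ r)
    (h3 : p < q + r) :
    q + r = Nat.gcd p q + Nat.gcd p r + Nat.gcd q (q + r - p) +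
        Nat.gcd r (q + r - p) ↔
      (p, q, r) = (1, 2, 3) ∨ (p, q, r) = (1, 3, 4) ∨ (p, q, r) = (1, 2, 2) := by
  have hpr : p < r := lt_of_lt_of_le h1 h2
  have e1 : q + r - p = (r - p) + q := by omega
  have e2 : q + r - p = (q - p) + r := by omega
  constructor
  · intro h
    have e3 : r - p + q = q - p + r := by omega
    rw [e1] at h
    rw [Nat.gcd_add_self_right q (r - p)] at h
    rw [e3, Nat.gcd_add_self_right] at h
    have ha : Nat.gcd p q ≤ p := Nat.gcd_le_left q hp
    have hb : Nat.gcd p r ≤ p := Nat.gcd_le_left r hp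
    have hc : Nat.gcd q (r - p) ≤ r - p := Nat.gcd_le_right (n := r - p) q (by omega)
    have hd : Nat.gcd r (q - p) ≤ q - p := Nat.gcd_le_right (n := q - p) r (by omega)
    have ha' : Nat.gcd p q = p := by omega
    have hb' : Nat.gcd p r = p := by omega
    have hc' : Nat.gcd q (r - p) = r - p := by omega
    have hd' : Nat.gcd r (q - p) = q - p := by omega
    have hpq : p ∣ q := ha' ▸ Nat.gcd_dvd_right p q
    have hpr' : p ∣ r := hb' ▸ Nat.gcd_dvd_right p r
    have hp1 : p = 1 := by
      have : p ∣ Nat.gcd (Nat.gcd p q) r :=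
        Nat.dvd_gcd (Nat.dvd_gcd dvd_rfl hpq) hpr'
      rw [hgcd] at this
      exact Nat.eq_one_of_dvd_one this
    subst hp1
    have hcq : (r - 1) ∣ q := hc' ▸ Nat.gcd_dvd_left q (r - 1)
    have hdr : (q - 1) ∣ r := hd' ▸ Nat.gcd_dvd_left r (q - 1)
    have hle : r - 1 ≤ q := Nat.le_of_dvd hq hcq
    -- so q = r - 1 or q = r
    rcases (by omega : q = r - 1 ∨ q = r) with h' | h'
    · -- q - 1 = r - 2 divides r, and divides r - 2, so divides 2
      have h2' : (q - 1) ∣ 2 := by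
        have := Nat.dvd_sub hdr (dvd_refl (q - 1))
        have hrq : r - (q - 1) = 2 := by omega
        rwa [hrq] at this
      have : q - 1 ≤ 2 := Nat.le_of_dvd (by norm_num) h2'
      rcases (by omega : q = 2 ∧ r = 3 ∨ q = 3 ∧ r = 4) with ⟨rfl, rfl⟩ | ⟨rfl, rfl⟩
      · left; rfl
      · right; left; rfl
    · -- q = r : r - 1 divides r and r - 1, so divides 1
      subst h'
      have h1' : (q - 1) ∣ 1 := by
        have := Nat.dvd_sub hdr (dvd_refl (q - 1))
        have : (q - 1) ∣ 1 := by
          have hq1 : q - (q - 1) = 1 := by omega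
          have := Nat.dvd_sub hdr (dvd_refl (q - 1))
          rwa [hq1] at this
        exact this
      have : q - 1 ≤ 1 := Nat.le_of_dvd one_pos h1'
      have : q = 2 := by omega
      subst this
      right; right; rfl
  · rintro (h | h | h) <;>
    · simp only [Prod.mk.injEq] at h
      obtain ⟨rfl, rfl, rfl⟩ := h
      decide
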